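/- Let G be a finite connected non-vertex-transitive graph with no terminal orbit. Then for every orbit O of Aut(G), the subgraph of G induced by O is disconnected. -/

import Mathlib

/-- The orbit of a vertex under the automorphism group of `G`. -/
def GraphOrbit {V : Type*} (G : SimpleGraph V) (v : V) : Set V :=
  {u | ∃ φ : G ≃g G, φ v = u}

/-- `O` is an orbit of `Aut(G)` on vertices. -/
def IsOrbit {V : Type*} (G : SimpleGraph V) (O : Set V) : Prop :=
  ∃ v, O = GraphOrbit G v

/-- `O` is a terminal orbit-candidate set: for every `u ∉ O` and `v ∈ O` there is a
`u`–`v` path meeting `O` only in `v`. -/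
def IsTerminalSet {V : Type*} (G : SimpleGraph V) (O : Set V) : Prop :=
  ∀ u ∉ O, ∀ v ∈ O, ∃ p : G.Walk u v, p.IsPath ∧ {x | x ∈ p.support} ∩ O = {v}

/-- `G` is vertex-transitive. -/
def IsVertexTransitive {V : Type*} (G : SimpleGraph V) : Prop :=
  ∀ u v : V, ∃ φ : G ≃g G, φ u = v

section Aux

variable {V : Type*} {G : SimpleGraph V}

lemma mem_graphOrbit_self (v : V) : v ∈ GraphOrbit G v :=
  ⟨RelIso.refl _, rfl⟩

lemma graphOrbit_inv {v x : V} (φ : G ≃g G) (hx : x ∈ GraphOrbit G v) :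
    φ x ∈ GraphOrbit G v := by
  obtain ⟨ψ, rfl⟩ := hx
  exact ⟨ψ.trans φ, rfl⟩

lemma dist_iso_le (hconn : G.Connected) (φ : G ≃g G) (x y : V) :
    G.dist (φ x) (φ y) ≤ G.dist x y := by
  obtain ⟨p, hp⟩ := (hconn x y).exists_walk_length_eq_dist
  calc G.dist (φ x) (φ y) ≤ (p.map φ.toHom).length := SimpleGraph.dist_le _
    _ = p.length := p.length_map φ.toHom
    _ = G.dist x y := hp

lemma dist_iso (hconn : G.Connected) (φ : G ≃g G) (x y : V) :
    G.dist (φ x) (φ y) = G.dist x y := by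
  refine le_antisymm (dist_iso_le hconn φ x y) ?_
  have := dist_iso_le hconn φ.symm (φ x) (φ y)
  rwa [φ.symm_apply_apply, φ.symm_apply_apply] at this

end Aux

theorem stmt4 {V : Type*} [Fintype V] (G : SimpleGraph V) (hconn : G.Connected)
    (hnt : ¬ IsVertexTransitive G)
    (hnoterm : ¬ ∃ O : Set V, IsOrbit G O ∧ IsTerminalSet G O) :
    ∀ O : Set V, IsOrbit G O → ¬ (G.induce O).Connected := by
  classical
  rintro Os ⟨w0, rfl⟩ hOconn
  apply hnoterm
  -- the set of vertices of the connected orbit, as a finset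
  set T : Finset V := Finset.univ.filter (· ∈ GraphOrbit G w0) with hT
  have hTne : T.Nonempty := ⟨w0, by simp [hT, mem_graphOrbit_self]⟩
  -- distance to the orbit of `w0`
  set d : V → ℕ := fun x => T.inf' hTne (G.dist x) with hd
  have hd_le : ∀ x o, o ∈ GraphOrbit G w0 → d x ≤ G.dist x o := by
    intro x o ho
    exact Finset.inf'_le _ (by simp [hT, ho])
  have hd_attain : ∀ x, ∃ o ∈ GraphOrbit G w0, d x = G.dist x o := by
    intro x
    obtain ⟨o, ho, h⟩ := T.exists_mem_eq_inf' hTne (G.dist x)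
    refine ⟨o, ?_, h⟩
    simpa [hT] using ho
  have hd_zero : ∀ o ∈ GraphOrbit G w0, d o = 0 := by
    intro o ho
    have := hd_le o o ho
    simpa [SimpleGraph.dist_self] using this
  have hd_zero' : ∀ x, d x = 0 → x ∈ GraphOrbit G w0 := by
    intro x hx
    obtain ⟨o, ho, h⟩ := hd_attain x
    have hxo : x = o := hconn.dist_eq_zero_iff.mp (by omega)
    rwa [hxo]
  -- invariance of `d` under automorphisms
  have hd_inv_le : ∀ (φ : G ≃g G) (x : V), d (φ x) ≤ d x := by
    intro φ x
    obtain ⟨o, ho, h⟩ := hd_attain x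
    calc d (φ x) ≤ G.dist (φ x) (φ o) := hd_le _ _ (graphOrbit_inv φ ho)
      _ = G.dist x o := dist_iso hconn φ x o
      _ = d x := h.symm
  have hd_inv : ∀ (φ : G ≃g G) (x : V), d (φ x) = d x := by
    intro φ x
    refine le_antisymm (hd_inv_le φ x) ?_
    have := hd_inv_le φ.symm (φ x)
    rwa [φ.symm_apply_apply] at this
  -- a vertex of maximal distance
  have hVne : Nonempty V := hconn.nonempty
  obtain ⟨u, -, hDle⟩ := Finset.exists_max_image Finset.univ d
    ⟨Classical.arbitrary V, Finset.mem_univ _⟩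
  have hDle : ∀ x, d x ≤ d u := fun x => hDle x (Finset.mem_univ x)
  -- the orbit of `w0` is proper, hence `d u ≥ 1`
  have hproper : ∃ w, w ∉ GraphOrbit G w0 := by
    by_contra h
    push_neg at h
    apply hnt
    intro a b
    obtain ⟨ψ, hψ⟩ := h a
    obtain ⟨χ, hχ⟩ := h b
    refine ⟨ψ.symm.trans χ, ?_⟩
    have hsa : ψ.symm a = w0 := by rw [← hψ, ψ.symm_apply_apply]
    simpa [RelIso.trans_apply, hsa] using hχ
  obtain ⟨w1, hw1⟩ := hproper
  have hDpos : 1 ≤ d u := by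
    have h1 : d w1 ≠ 0 := fun h => hw1 (hd_zero' w1 h)
    have h2 := hDle w1
    omega
  -- each vertex not on the orbit has a neighbor closer to it
  have hstep : ∀ x, d x ≠ 0 → ∃ y, G.Adj x y ∧ d y < d x := by
    intro x hx
    obtain ⟨o, ho, hxo⟩ := hd_attain x
    obtain ⟨p, hp⟩ := (hconn x o).exists_walk_length_eq_dist
    cases p with
    | nil =>
      exfalso
      rw [SimpleGraph.Walk.length_nil] at hp
      rw [hxo, ← hp] at hx
      exact hx rfl
    | @cons _ y _ hadj q =>
      refine ⟨y, hadj, ?_⟩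
      have h1 : G.dist y o ≤ q.length := SimpleGraph.dist_le q
      have h2 : q.length + 1 = G.dist x o := by
        simpa [SimpleGraph.Walk.length_cons] using hp
      have h3 : d y ≤ G.dist y o := hd_le y o ho
      omega
  -- every vertex reaches the orbit of `w0` by a walk whose inner vertices are closer
  have hreach : ∀ (n : ℕ) (x : V), d x ≤ n → ∃ o ∈ GraphOrbit G w0, ∃ p : G.Walk x o,
      ∀ y ∈ p.support, y = x ∨ d y < d x := by
    intro n
    induction n with
    | zero =>
      intro x hx
      exact ⟨x, hd_zero' x (Nat.le_zero.mp hx), SimpleGraph.Walk.nil, by simp⟩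
    | succ n ih =>
      intro x hx
      by_cases h0 : d x = 0
      · exact ⟨x, hd_zero' x h0, SimpleGraph.Walk.nil, by simp⟩
      · obtain ⟨y, hadj, hyx⟩ := hstep x h0
        obtain ⟨o, ho, p, hp⟩ := ih y (by omega)
        refine ⟨o, ho, SimpleGraph.Walk.cons hadj p, ?_⟩
        intro z hz
        rw [SimpleGraph.Walk.support_cons, List.mem_cons] at hz
        rcases hz with rfl | hz
        · exact Or.inl rfl
        · rcases hp z hz with rfl | h
          · exact Or.inr hyx
          · exact Or.inr (h.trans hyx)
  -- the orbit of `u` is terminal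
  refine ⟨GraphOrbit G u, ⟨u, rfl⟩, ?_⟩
  intro x hx v hv
  have hdu : ∀ y ∈ GraphOrbit G u, d y = d u := by
    rintro y ⟨φ, rfl⟩
    exact hd_inv φ u
  obtain ⟨o1, ho1, p1, hp1⟩ := hreach (d x) x le_rfl
  obtain ⟨o2, ho2, p2, hp2⟩ := hreach (d v) v le_rfl
  obtain ⟨q0⟩ := hOconn.preconnected ⟨o1, ho1⟩ ⟨o2, ho2⟩
  let q : G.Walk o1 o2 :=
    (q0.map (SimpleGraph.Embedding.induce (GraphOrbit G w0)).toHom).copy rfl rfl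
  have hq : ∀ y ∈ q.support, y ∈ GraphOrbit G w0 := by
    intro y hy
    change y ∈ (q0.map (SimpleGraph.Embedding.induce (GraphOrbit G w0)).toHom).support at hy
    rw [SimpleGraph.Walk.support_map] at hy
    obtain ⟨z, _, rfl⟩ := List.mem_map.mp hy
    exact z.2
  set W : G.Walk x v := p1.append (q.append p2.reverse) with hW
  refine ⟨W.bypass, W.bypass_isPath, ?_⟩
  ext y
  simp only [Set.mem_inter_iff, Set.mem_setOf_eq, Set.mem_singleton_iff]
  constructor
  · rintro ⟨hysup, hyO⟩
    have hyW : y ∈ W.support := W.support_bypass_subset hysup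
    have hyd : d y = d u := hdu y hyO
    rw [hW, SimpleGraph.Walk.mem_support_append_iff] at hyW
    rcases hyW with h1 | hyW
    · rcases hp1 y h1 with rfl | h
      · exact absurd hyO hx
      · have := hDle x; omega
    · rw [SimpleGraph.Walk.mem_support_append_iff] at hyW
      rcases hyW with h2 | h3
      · have := hd_zero y (hq y h2); omega
      · rw [SimpleGraph.Walk.support_reverse, List.mem_reverse] at h3
        rcases hp2 y h3 with rfl | h
        · rfl
        · have := hdu v hv; omega
  · rintro rfl
    exact ⟨SimpleGraph.Walk.end_mem_support _, hv⟩
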